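/- The perfect 8-cycle is self-complementary in Q_4: if C_8 = {∅, {1}, {1,2}, {1,2,3}, {1,2,3,4}, {2,3,4}, {3,4}, {4}} ⊆ V(Q_4), then there exists an automorphism of Q_4 mapping C_8 onto its complement V(Q_4) \ C_8. -/
import Mathlib


/-- The automorphism of `Q_4` (vertices: `Fin 4 → Bool`) given by a coordinate
permutation `π` and a coordinate complementation pattern `b`; every automorphism
of the hypercube is of this form. -/
def cubeAuto (π : Equiv.Perm (Fin 4)) (b : Fin 4 → Bool) (v : Fin 4 → Bool) :
    Fin 4 → Bool :=
  fun i => xor (v (π.symm i)) (b i)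

/-- The perfect 8-cycle `C₈ = {∅,{1},{1,2},{1,2,3},{1,2,3,4},{2,3,4},{3,4},{4}}` in `Q₄`,
with a vertex of `Q₄` identified with the Boolean indicator of a subset of `{1,2,3,4}`. -/
def perfectC8 : Set (Fin 4 → Bool) :=
  {v | ∃ k : ℕ, k ≤ 4 ∧ v = fun i : Fin 4 => decide ((i : ℕ) < k)} ∪
  {v | ∃ k : ℕ, 1 ≤ k ∧ k ≤ 3 ∧ v = fun i : Fin 4 => decide (k ≤ (i : ℕ))}

instance : DecidablePred (· ∈ perfectC8) := fun v =>
  decidable_of_iff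
    ((v = fun i : Fin 4 => decide ((i : ℕ) < 0)) ∨
     (v = fun i : Fin 4 => decide ((i : ℕ) < 1)) ∨
     (v = fun i : Fin 4 => decide ((i : ℕ) < 2)) ∨
     (v = fun i : Fin 4 => decide ((i : ℕ) < 3)) ∨
     (v = fun i : Fin 4 => decide ((i : ℕ) < 4)) ∨
     (v = fun i : Fin 4 => decide (1 ≤ (i : ℕ))) ∨
     (v = fun i : Fin 4 => decide (2 ≤ (i : ℕ))) ∨
     (v = fun i : Fin 4 => decide (3 ≤ (i : ℕ)))) (by
  constructor
  · rintro (h | h | h | h | h | h | h | h)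
    · exact Or.inl ⟨0, by omega, h⟩
    · exact Or.inl ⟨1, by omega, h⟩
    · exact Or.inl ⟨2, by omega, h⟩
    · exact Or.inl ⟨3, by omega, h⟩
    · exact Or.inl ⟨4, by omega, h⟩
    · exact Or.inr ⟨1, by omega, by omega, h⟩
    · exact Or.inr ⟨2, by omega, by omega, h⟩
    · exact Or.inr ⟨3, by omega, by omega, h⟩
  · rintro (⟨k, hk, h⟩ | ⟨k, hk1, hk, h⟩)
    · interval_cases k <;> simp_all
    · interval_cases k <;> simp_all)

/-- the perfect 8-cycle is self-complementary in `Q₄`: some automorphism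
of `Q₄` maps `C₈` onto its complement `V(Q₄) \ C₈`. -/
theorem stmt19 :
    ∃ (π : Equiv.Perm (Fin 4)) (b : Fin 4 → Bool),
      cubeAuto π b '' perfectC8 = perfectC8ᶜ := by
  refine ⟨1, ![false, true, false, true], ?_⟩
  have key : ∀ v : Fin 4 → Bool,
      cubeAuto 1 ![false, true, false, true] v ∈ perfectC8 ↔ v ∉ perfectC8 := by decide
  have inv : ∀ v, cubeAuto 1 ![false, true, false, true]
      (cubeAuto 1 ![false, true, false, true] v) = v := by decide
  ext v
  simp only [Set.mem_image, Set.mem_compl_iff]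
  constructor
  · rintro ⟨u, hu, rfl⟩
    exact fun h => ((key u).mp h) hu
  · intro hv
    exact ⟨cubeAuto 1 ![false, true, false, true] v, (key v).mpr hv, inv v⟩
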